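/- Let (V, d) be a metric, S a finite server set, and let O_{ik} ⊆ S, P_{ik} ⊆ S be subsets of size ik with dist(P_{ik}, O_{ik}) = η_{ik}, and similarly at index (i−1)k. Let R̂ be the requests of rounds (i−1)k+1, …, ik−1 with algorithm-matched servers Ŝ satisfying dist(Ŝ, R̂) ≤ γ·cost(ÔPT), and cost(ÔPT) ≤ Σ_{j=1}^{k} d(o_{(i−1)k+j}, r_{(i−1)k+j}) + η_{(i−1)k}. Then dist(P_{ik}, P_{ik−1} ∪ {r_{ik}}) ≤ (1+γ)·Σ_{j=1}^{k} d(o_{(i−1)k+j}, r_{(i−1)k+j}) + (1+γ)·η_{(i−1)k} + η_{ik}, where P_{ik−1} = P_{(i−1)k} ∪ Ŝ. -/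

import Mathlib

/-- The minimum cost of a perfect matching between two equal-size multisets
in a metric space. -/
noncomputable def mdist {V : Type*} [MetricSpace V] (A B : Multiset V) : ℝ :=
  sInf {c : ℝ | ∃ l₁ l₂ : List V, (l₁ : Multiset V) = A ∧ (l₂ : Multiset V) = B ∧
    c = (List.zipWith dist l₁ l₂).sum}

namespace MdistAux

variable {V : Type*} [MetricSpace V]

/-- The candidate set underlying `mdist`. -/
def mset (A B : Multiset V) : Set ℝ :=
  {c : ℝ | ∃ l₁ l₂ : List V, (l₁ : Multiset V) = A ∧ (l₂ : Multiset V) = B ∧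
    c = (List.zipWith dist l₁ l₂).sum}

lemma mdist_eq (A B : Multiset V) : mdist A B = sInf (mset A B) := rfl

lemma zipWith_dist_sum_nonneg : ∀ (l₁ l₂ : List V), 0 ≤ (List.zipWith dist l₁ l₂).sum := by
  intro l₁
  induction l₁ with
  | nil => intro l₂; simp
  | cons a t ih =>
    intro l₂
    cases l₂ with
    | nil => simp
    | cons b t₂ =>
      simp only [List.zipWith_cons_cons, List.sum_cons]
      have := ih t₂
      have := dist_nonneg (x := a) (y := b)
      linarith

lemma mset_nonneg {A B : Multiset V} : ∀ c ∈ mset A B, (0:ℝ) ≤ c := by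
  rintro c ⟨l₁, l₂, -, -, rfl⟩
  exact zipWith_dist_sum_nonneg l₁ l₂

lemma mset_bddBelow (A B : Multiset V) : BddBelow (mset A B) :=
  ⟨0, fun c hc => mset_nonneg c hc⟩

lemma mset_nonempty (A B : Multiset V) : (mset A B).Nonempty :=
  ⟨_, A.toList, B.toList, A.coe_toList, B.coe_toList, rfl⟩

lemma mdist_le {A B : Multiset V} {l₁ l₂ : List V}
    (h₁ : (l₁ : Multiset V) = A) (h₂ : (l₂ : Multiset V) = B) :
    mdist A B ≤ (List.zipWith dist l₁ l₂).sum :=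
  csInf_le (mset_bddBelow A B) ⟨l₁, l₂, h₁, h₂, rfl⟩

lemma mdist_comm (A B : Multiset V) : mdist A B = mdist B A := by
  unfold mdist
  congr 1
  ext c
  constructor
  · rintro ⟨l₁, l₂, h₁, h₂, rfl⟩
    exact ⟨l₂, l₁, h₂, h₁, by rw [List.zipWith_comm_of_comm dist_comm]⟩
  · rintro ⟨l₁, l₂, h₁, h₂, rfl⟩
    exact ⟨l₂, l₁, h₂, h₁, by rw [List.zipWith_comm_of_comm dist_comm]⟩

lemma exists_perm_map_fst {α β : Type*} (m : List α) :
    ∀ (p : List (α × β)), m.Perm (p.map Prod.fst) →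
      ∃ p' : List (α × β), List.Perm p' p ∧ p'.map Prod.fst = m := by
  induction m with
  | nil =>
    intro p h
    have : p.map Prod.fst = [] := h.symm.eq_nil
    rw [List.map_eq_nil_iff] at this
    exact ⟨[], by simp [this], rfl⟩
  | cons a m ih =>
    intro p h
    have ha : a ∈ p.map Prod.fst := h.subset (List.mem_cons_self)
    obtain ⟨q, hq, hqa⟩ := List.mem_map.mp ha
    obtain ⟨s, t, rfl⟩ := List.append_of_mem hq
    have hperm : ((s ++ q :: t).map Prod.fst).Perm (a :: ((s ++ t).map Prod.fst)) := by
      rw [List.map_append, List.map_cons, hqa, List.map_append]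
      exact List.perm_middle
    have h2 : m.Perm ((s ++ t).map Prod.fst) := (h.trans hperm).cons_inv
    obtain ⟨p'', hp'', hmap⟩ := ih _ h2
    refine ⟨q :: p'', ?_, ?_⟩
    · exact (hp''.cons q).trans List.perm_middle.symm
    · simp [hmap, hqa]

lemma zipWith_eq_map_zip {α β γ : Type*} (f : α → β → γ) :
    ∀ (l₁ : List α) (l₂ : List β),
      List.zipWith f l₁ l₂ = (l₁.zip l₂).map (fun q => f q.1 q.2) := by
  intro l₁
  induction l₁ with
  | nil => intro l₂; simp
  | cons a t ih =>
    intro l₂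
    cases l₂ with
    | nil => simp
    | cons b t₂ => simp [ih t₂]

lemma exists_perm_zip (l₂ l₂' l₃ : List V) (hp : l₂.Perm l₂')
    (hl : l₂'.length = l₃.length) :
    ∃ l₃' : List V, l₃'.Perm l₃ ∧
      (List.zipWith dist l₂ l₃').sum = (List.zipWith dist l₂' l₃).sum := by
  have hfst : (l₂'.zip l₃).map Prod.fst = l₂' := List.map_fst_zip (le_of_eq hl)
  obtain ⟨p', hp', hmap⟩ := exists_perm_map_fst l₂ (l₂'.zip l₃) (by rw [hfst]; exact hp)
  have hsnd : (l₂'.zip l₃).map Prod.snd = l₃ := List.map_snd_zip (ge_of_eq hl)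
  refine ⟨p'.map Prod.snd, ?_, ?_⟩
  · rw [← hsnd]; exact hp'.map _
  · have e1 : List.zipWith dist l₂ (p'.map Prod.snd)
        = p'.map (fun q => dist q.1 q.2) := by
      rw [← hmap, List.zipWith_map, List.zipWith_self]
    have e2 : List.zipWith dist l₂' l₃
        = (l₂'.zip l₃).map (fun q => dist q.1 q.2) := zipWith_eq_map_zip dist l₂' l₃
    rw [e1, e2]
    exact (hp'.map _).sum_eq

lemma zipWith_dist_triangle :
    ∀ (l₁ l₂ l₃ : List V), l₁.length = l₂.length → l₂.length = l₃.length →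
      (List.zipWith dist l₁ l₃).sum ≤
        (List.zipWith dist l₁ l₂).sum + (List.zipWith dist l₂ l₃).sum := by
  intro l₁
  induction l₁ with
  | nil =>
    intro l₂ l₃ _ _
    simpa using zipWith_dist_sum_nonneg l₂ l₃
  | cons a t ih =>
    intro l₂ l₃ h1 h2
    cases l₂ with
    | nil => simp at h1
    | cons b t₂ =>
      cases l₃ with
      | nil => simp at h2
      | cons c t₃ =>
        simp only [List.zipWith_cons_cons, List.sum_cons]
        have := ih t₂ t₃ (by simpa using h1) (by simpa using h2)
        have := dist_triangle a b c
        linarith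

lemma mdist_triangle (A B C : Multiset V)
    (hAB : Multiset.card A = Multiset.card B)
    (hBC : Multiset.card B = Multiset.card C) :
    mdist A C ≤ mdist A B + mdist B C := by
  have key : ∀ x ∈ mset A B, ∀ y ∈ mset B C, mdist A C ≤ x + y := by
    rintro x ⟨l₁, l₂, h₁, h₂, rfl⟩ y ⟨l₂', l₃, h₂', h₃, rfl⟩
    have hperm : l₂.Perm l₂' := Multiset.coe_eq_coe.mp (h₂.trans h₂'.symm)
    have hlen1 : l₁.length = l₂.length := by
      have e1 : l₁.length = Multiset.card A := by rw [← h₁, Multiset.coe_card]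
      have e2 : l₂.length = Multiset.card B := by rw [← h₂, Multiset.coe_card]
      rw [e1, e2, hAB]
    have hlen2 : l₂'.length = l₃.length := by
      have e1 : l₂'.length = Multiset.card B := by rw [← h₂', Multiset.coe_card]
      have e2 : l₃.length = Multiset.card C := by rw [← h₃, Multiset.coe_card]
      rw [e1, e2, hBC]
    obtain ⟨l₃', hl₃', hsum⟩ := exists_perm_zip l₂ l₂' l₃ hperm hlen2
    have hlen3 : l₂.length = l₃'.length := by
      rw [hl₃'.length_eq, ← hlen2, hperm.length_eq]
    have h₃' : (l₃' : Multiset V) = C := by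
      rw [← h₃]; exact Multiset.coe_eq_coe.mpr hl₃'
    calc mdist A C ≤ (List.zipWith dist l₁ l₃').sum := mdist_le h₁ h₃'
      _ ≤ (List.zipWith dist l₁ l₂).sum + (List.zipWith dist l₂ l₃').sum :=
          zipWith_dist_triangle l₁ l₂ l₃' hlen1 hlen3
      _ = (List.zipWith dist l₁ l₂).sum + (List.zipWith dist l₂' l₃).sum := by rw [hsum]
  have step1 : ∀ x ∈ mset A B, mdist A C - x ≤ mdist B C := by
    intro x hx
    exact le_csInf (mset_nonempty B C) fun y hy => by linarith [key x hx y hy]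
  have step2 : mdist A C - mdist B C ≤ mdist A B :=
    le_csInf (mset_nonempty A B) fun x hx => by linarith [step1 x hx]
  linarith

lemma mdist_add_left_le (C A B : Multiset V) :
    mdist (C + A) (C + B) ≤ mdist A B := by
  rw [mdist_eq A B]
  refine le_csInf (mset_nonempty A B) ?_
  rintro c ⟨l₁, l₂, h₁, h₂, rfl⟩
  have h₁' : ((C.toList ++ l₁ : List V) : Multiset V) = C + A := by
    rw [← Multiset.coe_add, Multiset.coe_toList, h₁]
  have h₂' : ((C.toList ++ l₂ : List V) : Multiset V) = C + B := by
    rw [← Multiset.coe_add, Multiset.coe_toList, h₂]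
  have e : (List.zipWith dist (C.toList ++ l₁) (C.toList ++ l₂)).sum
      = (List.zipWith dist l₁ l₂).sum := by
    rw [List.zipWith_append rfl, List.sum_append, List.zipWith_self]
    simp
  calc mdist (C + A) (C + B) ≤ _ := mdist_le h₁' h₂'
    _ = (List.zipWith dist l₁ l₂).sum := e

lemma mdist_map_le (o r : ℕ → V) (s : Multiset ℕ) :
    mdist (s.map o) (s.map r) ≤ (s.map (fun j => dist (o j) (r j))).sum := by
  have h₁ : ((s.toList.map o : List V) : Multiset V) = s.map o := by
    rw [← Multiset.map_coe, Multiset.coe_toList]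
  have h₂ : ((s.toList.map r : List V) : Multiset V) = s.map r := by
    rw [← Multiset.map_coe, Multiset.coe_toList]
  have e : (List.zipWith dist (s.toList.map o) (s.toList.map r)).sum
      = (s.map (fun j => dist (o j) (r j))).sum := by
    rw [List.zipWith_map, List.zipWith_self]
    conv_rhs => rw [← Multiset.coe_toList s, Multiset.map_coe, Multiset.sum_coe]
  calc mdist (s.map o) (s.map r) ≤ _ := mdist_le h₁ h₂
    _ = _ := e

end MdistAux

open MdistAux in
/-- Query-round bound of the parsimonious Follow-the-Prediction analysis.
`o j` (resp. `r j`) is the offline server (resp. request) of round `(i−1)k + j`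
for `j = 1, …, k`; `Oik = Oprev ∪ {o_1, …, o_k}`; the prediction errors are
`dist(Pik, Oik) = η_i` and `dist(Pprev, Oprev) = η_{i−1}`; the subroutine's
servers `Ŝ` for the requests `R̂ = {r_1, …, r_{k−1}}` satisfy
`dist(Ŝ, R̂) ≤ γ·cost(ÔPT)` with
`cost(ÔPT) ≤ Σ_{j=1}^{k} d(o_j, r_j) + η_{i−1}`; and `P_{ik−1} = Pprev ∪ Ŝ`.
Then `dist(Pik, P_{ik−1} ∪ {r_k}) ≤
(1+γ)·Σ_{j=1}^{k} d(o_j, r_j) + (1+γ)·η_{i−1} + η_i`. -/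
theorem stmt19 {V : Type*} [MetricSpace V] (k : ℕ) (hk : 1 ≤ k)
    (γ : ℝ) (hγ : 1 ≤ γ)
    (Pik Pik1 Pprev Oik Oprev Shat : Multiset V)
    (o r : ℕ → V) (ηi ηprev optA : ℝ)
    (hO : Oik = Oprev + (Finset.Icc 1 k).val.map o)
    (hcard1 : Multiset.card Pik = Multiset.card Oik)
    (hcard2 : Multiset.card Pprev = Multiset.card Oprev)
    (hcard3 : Multiset.card Shat = k - 1)
    (hη1 : mdist Pik Oik = ηi)
    (hη0 : mdist Pprev Oprev = ηprev)
    (hoptnn : 0 ≤ optA)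
    (hadh : mdist Shat ((Finset.Icc 1 (k - 1)).val.map r) ≤ γ * optA)
    (hopt : optA ≤ (∑ j ∈ Finset.Icc 1 k, dist (o j) (r j)) + ηprev)
    (hP : Pik1 = Pprev + Shat) :
    mdist Pik (r k ::ₘ Pik1) ≤
      (1 + γ) * (∑ j ∈ Finset.Icc 1 k, dist (o j) (r j))
        + (1 + γ) * ηprev + ηi := by
  -- notation
  set Ik := (Finset.Icc 1 k).val with hIk
  set Ik1 := (Finset.Icc 1 (k-1)).val with hIk1
  have hsplit : Ik = k ::ₘ Ik1 := by
    have hnot : k ∉ Finset.Icc 1 (k-1) := by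
      simp only [Finset.mem_Icc]; omega
    have hins : Finset.Icc 1 k = insert k (Finset.Icc 1 (k-1)) := by
      ext j; simp only [Finset.mem_Icc, Finset.mem_insert]; omega
    rw [hIk, hIk1, hins, Finset.insert_val_of_notMem hnot]
  have hcardIk : Multiset.card Ik = k := by
    rw [hIk]; simp [Nat.card_Icc]
  have hcardIk1 : Multiset.card Ik1 = k - 1 := by
    rw [hIk1]; simp [Nat.card_Icc]
  set Sd := ∑ j ∈ Finset.Icc 1 k, dist (o j) (r j) with hSd
  have hSd' : Sd = (Ik.map (fun j => dist (o j) (r j))).sum := by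
    rw [hSd, Finset.sum_eq_multiset_sum]
  have hSnn : 0 ≤ Sd := by
    rw [hSd]
    exact Finset.sum_nonneg fun j _ => dist_nonneg
  -- the intermediate multisets
  set M := Oprev + Ik.map r with hM
  set C := r k ::ₘ Pik1 with hC
  -- cardinalities
  have cOik : Multiset.card Oik = Multiset.card Oprev + k := by
    rw [hO]; simp [hcardIk]
  have cM : Multiset.card M = Multiset.card Oprev + k := by
    rw [hM]; simp [hcardIk]
  have cC : Multiset.card C = Multiset.card Oprev + k := by
    rw [hC, hP]
    simp only [Multiset.card_cons, Multiset.card_add, hcard2, hcard3]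
    omega
  -- step 1: triangle through Oik
  have t1 : mdist Pik C ≤ mdist Pik Oik + mdist Oik C :=
    mdist_triangle _ _ _ (by rw [hcard1]) (by rw [cOik, cC])
  -- step 2: triangle through M
  have t2 : mdist Oik C ≤ mdist Oik M + mdist M C :=
    mdist_triangle _ _ _ (by rw [cOik, cM]) (by rw [cM, cC])
  -- bound mdist Oik M
  have b1 : mdist Oik M ≤ Sd := by
    have := mdist_add_left_le Oprev (Ik.map o) (Ik.map r)
    have h2 := mdist_map_le o r Ik
    rw [hO, hM, hSd']
    linarith
  -- bound mdist M C
  have hMsplit : M = r k ::ₘ (Oprev + Ik1.map r) := by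
    rw [hM, hsplit, Multiset.map_cons, Multiset.add_cons]
  have b2 : mdist M C ≤ ηprev + γ * optA := by
    have step : mdist M C ≤ mdist (Oprev + Ik1.map r) (Pprev + Shat) := by
      rw [hMsplit, hC, hP]
      have := mdist_add_left_le {r k} (Oprev + Ik1.map r) (Pprev + Shat)
      simpa [Multiset.singleton_add] using this
    have tri : mdist (Oprev + Ik1.map r) (Pprev + Shat)
        ≤ mdist (Oprev + Ik1.map r) (Pprev + Ik1.map r)
          + mdist (Pprev + Ik1.map r) (Pprev + Shat) := by
      apply mdist_triangle
      · simp [hcard2]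
      · simp [hcard3, hcardIk1]
    have c1 : mdist (Oprev + Ik1.map r) (Pprev + Ik1.map r) ≤ ηprev := by
      have e : mdist (Oprev + Ik1.map r) (Pprev + Ik1.map r)
          = mdist (Ik1.map r + Oprev) (Ik1.map r + Pprev) := by
        rw [add_comm Oprev, add_comm Pprev]
      rw [e]
      calc mdist (Ik1.map r + Oprev) (Ik1.map r + Pprev)
          ≤ mdist Oprev Pprev := mdist_add_left_le _ _ _
        _ = mdist Pprev Oprev := mdist_comm _ _
        _ = ηprev := hη0
    have c2 : mdist (Pprev + Ik1.map r) (Pprev + Shat) ≤ γ * optA := by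
      calc mdist (Pprev + Ik1.map r) (Pprev + Shat)
          ≤ mdist (Ik1.map r) Shat := mdist_add_left_le _ _ _
        _ = mdist Shat (Ik1.map r) := mdist_comm _ _
        _ ≤ γ * optA := hadh
    linarith
  have hγopt : γ * optA ≤ γ * (Sd + ηprev) := by
    apply mul_le_mul_of_nonneg_left hopt (by linarith)
  have hηprevnn : 0 ≤ ηprev := by
    rw [← hη0, mdist_eq]
    exact le_csInf (mset_nonempty _ _) fun c hc => mset_nonneg c hc
  rw [← hη1]
  nlinarith [t1, t2, b1, b2, hγopt]
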